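/- For any real t with |t| ≤ T and 0 < T < π/2, the upper cosine envelope satisfies 1 − (1 − cos T)·t²/T² ≥ cos t with equality if and only if t ∈ {−T, 0, T}. -/

import Mathlib

open Real

lemma sin_div_strict (a b : ℝ) (ha : 0 < a) (hab : a < b) (hb : b ≤ Real.pi) :
    a * Real.sin b < b * Real.sin a := by
  have hb0 : 0 < b := ha.trans hab
  have h := strictConcaveOn_sin_Icc.2 (Set.mem_Icc.mpr ⟨le_rfl, Real.pi_pos.le⟩)
    (Set.mem_Icc.mpr ⟨hb0.le, hb⟩) hb0.ne
    (show (0:ℝ) < 1 - a / b by rw [sub_pos, div_lt_one hb0]; exact hab)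
    (show (0:ℝ) < a / b by positivity) (by ring)
  simp only [smul_eq_mul, mul_zero, Real.sin_zero, zero_add] at h
  rw [div_mul_cancel₀ _ hb0.ne', div_mul_eq_mul_div, div_lt_iff₀ hb0] at h
  linarith [h, mul_comm (Real.sin a) b]

lemma one_sub_cos_eq (x : ℝ) : 1 - Real.cos x = 2 * Real.sin (x / 2) ^ 2 := by
  have h1 := Real.cos_two_mul (x / 2)
  have h2 := Real.sin_sq_add_cos_sq (x / 2)
  have : (2 : ℝ) * (x / 2) = x := by ring
  rw [this] at h1
  nlinarith

lemma strict_case (t T : ℝ) (hT0 : 0 < T) (hT : T < Real.pi / 2)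
    (ht0 : 0 < |t|) (ht : |t| < T) :
    Real.cos t < 1 - (1 - Real.cos T) * t ^ 2 / T ^ 2 := by
  have hpi := Real.pi_pos
  have key := sin_div_strict (|t| / 2) (T / 2) (by positivity) (by linarith)
    (by linarith)
  have hsabs : 0 < Real.sin (|t| / 2) :=
    Real.sin_pos_of_pos_of_lt_pi (by positivity) (by linarith)
  have hsT : 0 < Real.sin (T / 2) :=
    Real.sin_pos_of_pos_of_lt_pi (by positivity) (by linarith)
  -- square the inequality
  have hsq : t ^ 2 * Real.sin (T / 2) ^ 2 < T ^ 2 * Real.sin (|t| / 2) ^ 2 := by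
    have h1 : 0 ≤ |t| / 2 * Real.sin (T / 2) := by positivity
    nlinarith [sq_abs t, abs_nonneg t]
  have e1 : 1 - Real.cos T = 2 * Real.sin (T / 2) ^ 2 := one_sub_cos_eq T
  have e2 : 1 - Real.cos t = 2 * Real.sin (|t| / 2) ^ 2 := by
    rw [← Real.cos_abs t]; exact one_sub_cos_eq |t|
  have hT2 : (0:ℝ) < T ^ 2 := by positivity
  have : (1 - Real.cos T) * t ^ 2 / T ^ 2 < 1 - Real.cos t := by
    rw [div_lt_iff₀ hT2]
    nlinarith
  linarith

theorem cos_upper_envelope_equality (t T : ℝ) (hT0 : 0 < T)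
    (hT : T < Real.pi / 2) (ht : |t| ≤ T) :
    Real.cos t ≤ 1 - (1 - Real.cos T) * t ^ 2 / T ^ 2 ∧
    (1 - (1 - Real.cos T) * t ^ 2 / T ^ 2 = Real.cos t ↔
      t = -T ∨ t = 0 ∨ t = T) := by
  have hT2 : (0:ℝ) < T ^ 2 := by positivity
  rcases eq_or_lt_of_le ht with heq | hlt
  · -- |t| = T, so t = T or t = -T
    have ht' : t = T ∨ t = -T := abs_eq hT0.le |>.mp heq
    have hcos : Real.cos t = Real.cos T := by rw [← Real.cos_abs t, heq]
    have hrhs : 1 - (1 - Real.cos T) * t ^ 2 / T ^ 2 = Real.cos t := by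
      have : t ^ 2 = T ^ 2 := by rcases ht' with rfl | rfl <;> ring
      rw [this, hcos]; field_simp; ring
    refine ⟨le_of_eq hrhs.symm, ⟨fun _ => ?_, fun _ => hrhs⟩⟩
    rcases ht' with rfl | rfl
    · exact Or.inr (Or.inr rfl)
    · exact Or.inl rfl
  · rcases eq_or_ne t 0 with rfl | ht0
    · simp
    · have habs : 0 < |t| := abs_pos.mpr ht0
      have hstrict := strict_case t T hT0 hT habs hlt
      refine ⟨hstrict.le, ⟨fun h => absurd h.symm (ne_of_lt hstrict), fun h => ?_⟩⟩
      rcases h with rfl | rfl | rfl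
      · simp [abs_of_nonpos (neg_nonpos.mpr hT0.le)] at hlt
      · exact absurd rfl ht0
      · simp [abs_of_nonneg hT0.le] at hlt
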